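/- For 1 ≤ k ≤ n let L_k be the list obtained from the staircase list L_max by deleting the final letter s_1 of the k-th block, i.e. L_k is the concatenation (s_1)(s_2,s_1)⋯(s_{k−1},…,s_1)(s_k,…,s_2)(s_{k+1},…,s_1)⋯(s_n,…,s_1). Then for every permutation u of Fin (n+1) with u ≠ w_L there exist k ∈ {1,…,n} and a sublist M of L_k such that the product of M equals u. -/

import Mathlib

noncomputable section

/-- The adjacent transposition `s_r = (r, r+1)` (1-based indexing) in `Perm (Fin (n+1))`,
acting on `{1,…,n+1}` identified with `Fin (n+1)`. -/
def s (n : ℕ) (r : ℕ) : Equiv.Perm (Fin (n + 1)) := Equiv.swap (Fin.ofNat (n + 1) (r - 1)) (Fin.ofNat (n + 1) r)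

/-- The block `(s_b, s_{b-1}, …, s_a)`, recorded as the list of indices `[b, b-1, …, a]`. -/
def block (a b : ℕ) : List ℕ := (List.range' a (b + 1 - a)).reverse

/-- The staircase list `L_max`: concatenation of the blocks `(s_p, …, s_1)` for
`p = 1, …, n`, of length `n(n+1)/2`. -/
def Lmax (n : ℕ) : List ℕ :=
  (List.ofFn fun p : Fin n => block 1 ((p : ℕ) + 1)).flatten

/-- The list `L_k`, obtained from `L_max` by deleting the final letter `s_1` of the `k`-th
block:  `(s_1)(s_2,s_1)⋯(s_{k-1},…,s_1)(s_k,…,s_2)(s_{k+1},…,s_1)⋯(s_n,…,s_1)`. -/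
def Lk (n k : ℕ) : List ℕ :=
  (List.ofFn fun p : Fin n =>
    if (p : ℕ) + 1 = k then block 2 ((p : ℕ) + 1) else block 1 ((p : ℕ) + 1)).flatten

/- ### Auxiliary lemmas -/

open Fin.NatCast

lemma block_eq_nil {a b : ℕ} (h : b < a) : block a b = [] := by
  simp [block, show b + 1 - a = 0 by omega]

lemma block_cons {a b : ℕ} (h : a ≤ b + 1) : block a (b + 1) = (b + 1) :: block a b := by
  unfold block
  rw [show b + 1 + 1 - a = (b + 1 - a) + 1 by omega, List.range'_concat,
    show a + 1 * (b + 1 - a) = b + 1 by omega, List.reverse_append]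
  simp

lemma block_sublist {i j p : ℕ} (h : i ≤ j) : (block j p).Sublist (block i p) := by
  by_cases hj : p + 1 < j
  · rw [block_eq_nil (by omega)]; exact List.nil_sublist _
  · unfold block
    apply List.Sublist.reverse
    apply List.IsSuffix.sublist
    refine ⟨List.range' i (j - i), ?_⟩
    have h2 := List.range'_append (s := i) (m := j - i) (n := p + 1 - j) (step := 1)
    rw [show i + 1 * (j - i) = j by omega] at h2
    rw [h2]
    congr 1
    omega

lemma flatten_sublist {α : Type*} {l₁ l₂ : List (List α)}
    (h : List.Forall₂ (fun a b => List.Sublist a b) l₁ l₂) :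
    l₁.flatten.Sublist l₂.flatten := by
  induction h with
  | nil => simp
  | cons h _ ih => simpa using h.append ih

lemma s_apply_of_gt (n r : ℕ) (hr : r ≤ n) (x : Fin (n + 1)) (hx : r < x.val) :
    s n r x = x := by
  apply Equiv.swap_apply_of_ne_of_ne
  · intro h
    rw [h, Fin.val_ofNat, Nat.mod_eq_of_lt (show r - 1 < n + 1 by omega)] at hx
    omega
  · intro h
    rw [h, Fin.val_ofNat, Nat.mod_eq_of_lt (show r < n + 1 by omega)] at hx
    omega

lemma T_fix (n j : ℕ) (hj : 1 ≤ j) : ∀ p, p ≤ n → ∀ x : Fin (n + 1), p < x.val →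
    (((block j p).map (s n)).prod) x = x := by
  intro p
  induction p with
  | zero =>
    intro _ x _
    rw [block_eq_nil (by omega)]
    simp
  | succ p ih =>
    intro hp x hx
    by_cases h : j ≤ p + 1
    · rw [block_cons h]
      simp only [List.map_cons, List.prod_cons, Equiv.Perm.mul_apply]
      rw [ih (by omega) x (by omega), s_apply_of_gt n (p + 1) (by omega) x hx]
    · rw [block_eq_nil (by omega)]
      simp

lemma T_apply (n c : ℕ) (hc : c ≤ n) : ∀ p, c ≤ p → p ≤ n →
    (((block (c + 1) p).map (s n)).prod) ((c : ℕ) : Fin (n + 1)) = ((p : ℕ) : Fin (n + 1)) := by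
  intro p
  induction p with
  | zero =>
    intro h1 _
    have hc0 : c = 0 := by omega
    subst hc0
    rw [block_eq_nil (by omega)]
    simp
  | succ p ih =>
    intro h1 h2
    by_cases h : c = p + 1
    · rw [block_eq_nil (by omega)]
      subst h
      simp
    · rw [block_cons (by omega)]
      simp only [List.map_cons, List.prod_cons, Equiv.Perm.mul_apply]
      rw [ih (by omega) (by omega)]
      show Equiv.swap (((p + 1 - 1 : ℕ) : Fin (n + 1))) (((p + 1 : ℕ) : Fin (n + 1))) _ = _
      rw [show p + 1 - 1 = p from rfl]
      exact Equiv.swap_apply_left _ _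

lemma decomp (n : ℕ) : ∀ m, m ≤ n → ∀ u : Equiv.Perm (Fin (n + 1)),
    (∀ x : Fin (n + 1), m < x.val → u x = x) →
    ∃ f : ℕ → ℕ, (∀ p, 1 ≤ f p ∧ f p ≤ p + 1) ∧
      u = (((List.ofFn fun p : Fin m =>
        block (f ((p : ℕ) + 1)) ((p : ℕ) + 1)).flatten).map (s n)).prod := by
  intro m
  induction m with
  | zero =>
    intro _ u hu
    refine ⟨fun _ => 1, fun p => ⟨le_rfl, Nat.succ_le_succ (Nat.zero_le p)⟩, ?_⟩
    simp only [List.ofFn_zero, List.flatten_nil, List.map_nil, List.prod_nil]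
    apply Equiv.ext
    intro x
    show u x = x
    by_cases hx : 0 < x.val
    · exact hu x hx
    · have h0 : x.val = 0 := by omega
      by_contra hne
      have hy : 0 < (u x).val := by
        rcases Nat.eq_zero_or_pos (u x).val with h | h
        · exact absurd (Fin.ext (h.trans h0.symm) : u x = x) hne
        · exact h
      have h1 := hu (u x) hy
      have h2 := u.injective h1
      rw [h2] at hy
      omega
  | succ m ih =>
    intro hm u hu
    set c : Fin (n + 1) := u⁻¹ (((m + 1 : ℕ)) : Fin (n + 1)) with hc
    have hmn : m + 1 < n + 1 := by omega
    have hval : (((m + 1 : ℕ)) : Fin (n + 1)).val = m + 1 := Fin.val_cast_of_lt hmn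
    have huc : u c = ((m + 1 : ℕ) : Fin (n + 1)) := by
      rw [hc]; exact u.apply_symm_apply _
    have hcval : c.val ≤ m + 1 := by
      by_contra h
      push_neg at h
      have h1 := hu c (by omega)
      rw [h1] at huc
      rw [huc, hval] at h
      omega
    set t : Equiv.Perm (Fin (n + 1)) := ((block (c.val + 1) (m + 1)).map (s n)).prod with htd
    have htc : t c = ((m + 1 : ℕ) : Fin (n + 1)) := by
      have h1 := T_apply n c.val (by omega) (m + 1) hcval (by omega)
      rwa [Fin.cast_val_eq_self] at h1
    have htfix : ∀ x : Fin (n + 1), m + 1 < x.val → t x = x := fun x hx =>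
      T_fix n (c.val + 1) (by omega) (m + 1) (by omega) x hx
    have hu' : ∀ x : Fin (n + 1), m < x.val → (u * t⁻¹) x = x := by
      intro x hx
      by_cases hx1 : m + 1 < x.val
      · have h1 : t⁻¹ x = x := by
          conv_lhs => rw [← htfix x hx1]
          exact t.symm_apply_apply x
        rw [Equiv.Perm.mul_apply, h1]
        exact hu x (by omega)
      · have hxm : x = ((m + 1 : ℕ) : Fin (n + 1)) := by
          apply Fin.ext
          rw [hval]
          omega
        have h1 : t⁻¹ x = c := by
          rw [hxm, ← htc]
          exact t.symm_apply_apply c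
        rw [Equiv.Perm.mul_apply, h1, huc, hxm]
    obtain ⟨f', hf', hdef⟩ := ih (by omega) (u * t⁻¹) hu'
    refine ⟨fun p => if p = m + 1 then c.val + 1 else f' p, ?_, ?_⟩
    · intro p
      have hb := hf' p
      show 1 ≤ (if p = m + 1 then c.val + 1 else f' p) ∧
        (if p = m + 1 then c.val + 1 else f' p) ≤ p + 1
      by_cases h : p = m + 1
      · rw [if_pos h]
        constructor <;> omega
      · rw [if_neg h]
        exact hb
    · beta_reduce
      have hlist : (List.ofFn fun p : Fin (m + 1) =>
          block (if (p : ℕ) + 1 = m + 1 then c.val + 1 else f' ((p : ℕ) + 1)) ((p : ℕ) + 1))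
          = (List.ofFn fun p : Fin m => block (f' ((p : ℕ) + 1)) ((p : ℕ) + 1))
            ++ [block (c.val + 1) (m + 1)] := by
        rw [List.ofFn_succ', List.concat_eq_append]
        congr 1
        · congr 1
          funext p
          have hp := p.isLt
          rw [Fin.coe_castSucc, if_neg (by omega)]
        · rw [Fin.val_last, if_pos rfl]
      rw [hlist, List.flatten_append, List.map_append, List.prod_append, ← hdef]
      simp only [List.flatten_cons, List.flatten_nil, List.append_nil]
      rw [← htd]
      group

/-- Every permutation `u ≠ w_L` (where `w_L` is the product of the staircase list) is the
product of a sublist of some `L_k`, `1 ≤ k ≤ n`. -/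
theorem stmt2 (n : ℕ) (hn : 1 ≤ n) (wL : Equiv.Perm (Fin (n + 1)))
    (hwL : wL = ((Lmax n).map (s n)).prod)
    (u : Equiv.Perm (Fin (n + 1))) (hu : u ≠ wL) :
    ∃ k ∈ Finset.Icc 1 n, ∃ M : List ℕ, M.Sublist (Lk n k) ∧ (M.map (s n)).prod = u := by
  obtain ⟨f, hf, hdecomp⟩ := decomp n n le_rfl u (fun x hx => absurd x.isLt (by omega))
  by_cases hall : ∀ p ∈ Finset.Icc 1 n, f p = 1
  · exfalso
    apply hu
    rw [hwL, hdecomp]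
    unfold Lmax
    have heq : (fun p : Fin n => block (f ((p : ℕ) + 1)) ((p : ℕ) + 1))
        = fun p : Fin n => block 1 ((p : ℕ) + 1) := by
      funext p
      have hp := p.isLt
      rw [hall ((p : ℕ) + 1) (Finset.mem_Icc.mpr ⟨by omega, by omega⟩)]
    rw [heq]
  · push_neg at hall
    obtain ⟨k, hk, hfk⟩ := hall
    have hfk2 : 2 ≤ f k := by
      have := hf k
      omega
    refine ⟨k, hk, _, ?_, hdecomp.symm⟩
    unfold Lk
    apply flatten_sublist
    rw [List.ofFn_eq_map, List.ofFn_eq_map, List.forall₂_map_left_iff,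
      List.forall₂_map_right_iff, List.forall₂_same]
    intro p _
    by_cases h : (p : ℕ) + 1 = k
    · rw [if_pos h, h]
      exact block_sublist hfk2
    · rw [if_neg h]
      exact block_sublist (hf ((p : ℕ) + 1)).1
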